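/- Let q ≥ 2 be an integer and let (τ_n)_{n≥0} be a strongly q-multiplicative sequence of complex numbers with |τ_n| ≤ 1 for all n. Let ψ(N) = Σ_{n<N} τ_n. If |ψ(q)| = |τ_0 + τ_1 + … + τ_{q−1}| > 1, then ψ(N) = O(N^{log|ψ(q)| / log q}), i.e. there is a constant C such that |ψ(N)| ≤ C·N^{log|ψ(q)|/log q} for all N ≥ 1. -/

import Mathlib

open Finset

/-- If `τ` is a strongly `q`-multiplicative sequence of complex numbers
of absolute value at most `1`, and `|ψ(q)| > 1` where `ψ(N) = ∑_{n<N} τ n`,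
then `ψ(N) = O(N ^ (log |ψ(q)| / log q))`. -/
theorem rarefaction_stmt1
    (q : ℕ) (hq : 2 ≤ q) (τ : ℕ → ℂ)
    (hτ0 : τ 0 = 1)
    (hmul : ∀ n : ℕ, ∀ c : ℕ, c < q → τ (q * n + c) = τ n * τ c)
    (hbound : ∀ n : ℕ, ‖τ n‖ ≤ 1)
    (hbig : 1 < ‖∑ n ∈ Finset.range q, τ n‖) :
    ∃ C : ℝ, ∀ N : ℕ, 1 ≤ N →
      ‖∑ n ∈ Finset.range N, τ n‖ ≤
        C * (N : ℝ) ^ (Real.log ‖∑ n ∈ Finset.range q, τ n‖ / Real.log q) := by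
  set S := ∑ n ∈ Finset.range q, τ n with hS
  set s := ‖S‖ with hs
  set α := Real.log s / Real.log q with hα
  have hs1 : 1 < s := hbig
  have hq1 : (1:ℝ) < q := by
    have : (2:ℝ) ≤ q := by exact_mod_cast hq
    linarith
  have hlogq : 0 < Real.log q := Real.log_pos hq1
  have hα0 : 0 ≤ α := div_nonneg (Real.log_nonneg hs1.le) hlogq.le
  have hqα : (q:ℝ) ^ α = s := by
    rw [hα, Real.rpow_def_of_pos (by linarith), mul_comm,
      div_mul_cancel₀ _ hlogq.ne', Real.exp_log (by linarith)]
  have key : ∀ M c, c ≤ q →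
      ∑ n ∈ range (q * M + c), τ n =
        (∑ n ∈ range M, τ n) * S + τ M * ∑ j ∈ range c, τ j := by
    intro M
    induction M with
    | zero => intro c hc; simp [hτ0]
    | succ M ih =>
      intro c hc
      have h1 : q * (M+1) + c = (q * M + q) + c := by ring
      rw [h1, Finset.sum_range_add, ih q le_rfl]
      have h3 : ∀ j ∈ range c, τ (q * M + q + j) = τ (M+1) * τ j := by
        intro j hj
        have h4 : q * M + q + j = q * (M+1) + j := by ring
        rw [h4, hmul (M+1) j (lt_of_lt_of_le (mem_range.mp hj) hc)]
      rw [Finset.sum_congr rfl h3, ← Finset.mul_sum, Finset.sum_range_succ]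
      ring
  set D : ℝ := q / (s - 1) with hD
  set C : ℝ := q + D with hC
  have hs1' : s - 1 ≠ 0 := by intro h; rw [sub_eq_zero] at h; simp [h] at hs1
  have hD0 : 0 ≤ D := div_nonneg (by positivity) (by linarith)
  have hC0 : 0 ≤ C := by positivity
  have hDs : s * D = D + q := by
    rw [hD]; field_simp; ring
  have main : ∀ N : ℕ, 1 ≤ N →
      ‖∑ n ∈ range N, τ n‖ ≤ C * (N:ℝ) ^ α - D := by
    intro N
    induction N using Nat.strong_induction_on with
    | _ N ih =>
      intro hN1
      have habs : ∀ K : ℕ, ‖∑ n ∈ range K, τ n‖ ≤ K := by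
        intro K
        calc ‖∑ n ∈ range K, τ n‖ ≤ ∑ n ∈ range K, ‖τ n‖ :=
              norm_sum_le _ _
          _ ≤ ∑ n ∈ range K, 1 := Finset.sum_le_sum (fun n _ => hbound n)
          _ = K := by simp
      have hNα : (1:ℝ) ≤ (N:ℝ) ^ α := by
        calc (1:ℝ) = (1:ℝ) ^ α := (Real.one_rpow α).symm
          _ ≤ (N:ℝ) ^ α := Real.rpow_le_rpow (by norm_num) (by exact_mod_cast hN1) hα0
      by_cases hNq : N < q
      · have hCN : C * 1 ≤ C * (N:ℝ) ^ α := mul_le_mul_of_nonneg_left hNα hC0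
        have h5 : (N:ℝ) ≤ q := by exact_mod_cast hNq.le
        calc ‖∑ n ∈ range N, τ n‖ ≤ N := habs N
          _ ≤ C * (N:ℝ) ^ α - D := by rw [hC] at hCN ⊢; linarith
      · push_neg at hNq
        set M := N / q with hM
        set c := N % q with hc
        have hNdec : q * M + c = N := Nat.div_add_mod N q
        have hM1 : 1 ≤ M := (Nat.one_le_div_iff (by omega)).mpr hNq
        have hMN : M < N := Nat.div_lt_self (by omega) (by omega)
        have hIH := ih M hMN hM1
        have hcq : c ≤ q := (Nat.mod_lt N (by omega)).le
        have hψc : ‖∑ j ∈ range c, τ j‖ ≤ q := by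
          calc ‖∑ j ∈ range c, τ j‖ ≤ c := habs c
            _ ≤ (q:ℝ) := by exact_mod_cast hcq
        have hqMN : (q:ℝ) * (M:ℝ) ≤ (N:ℝ) := by
          have : q * M ≤ N := by omega
          exact_mod_cast this
        have hmono : s * (M:ℝ) ^ α ≤ (N:ℝ) ^ α := by
          rw [← hqα, ← Real.mul_rpow (by positivity) (by positivity)]
          exact Real.rpow_le_rpow (by positivity) hqMN hα0
        have hCmono : C * (s * (M:ℝ) ^ α) ≤ C * (N:ℝ) ^ α :=
          mul_le_mul_of_nonneg_left hmono hC0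
        rw [← hNdec, key M c hcq]
        calc ‖(∑ n ∈ range M, τ n) * S + τ M * ∑ j ∈ range c, τ j‖
            ≤ ‖(∑ n ∈ range M, τ n) * S‖
              + ‖τ M * ∑ j ∈ range c, τ j‖ := norm_add_le _ _
          _ = ‖∑ n ∈ range M, τ n‖ * s
              + ‖τ M‖ * ‖∑ j ∈ range c, τ j‖ := by
              rw [norm_mul, norm_mul]
          _ ≤ (C * (M:ℝ) ^ α - D) * s + 1 * q := by
              have h6 := mul_le_mul_of_nonneg_right hIH (by linarith : (0:ℝ) ≤ s)
              have h7 := mul_le_mul (hbound M) hψc (norm_nonneg _) zero_le_one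
              linarith
          _ = C * (s * (M:ℝ) ^ α) - (s * D) + q := by ring
          _ = C * (s * (M:ℝ) ^ α) - D := by rw [hDs]; ring
          _ ≤ C * ((q * M + c : ℕ) : ℝ) ^ α - D := by rw [hNdec]; linarith
  refine ⟨C, fun N hN => ?_⟩
  have h := main N hN
  linarith
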